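/- Let (A,B) and (Ã,B̃) be orthogonally equivalent standard nondegenerate HIN pairs, with Ã = TᵀAT and B̃ = TᵀB for a real orthogonal matrix T. Suppose that for some k with 1 ≤ k < n one has A_{k+1,k} = 0, B_{1,1} > 0, and A_{j+1,j} > 0 for all j < k. Then T = I_k ⊕ U for some (n−k)×(n−k) orthogonal matrix U (i.e., T is block diagonal with identity in the top-left k×k block), and moreover Ã_{k+1,k} = 0. -/
import Mathlib


open Matrix

/-- `(A,B)` is in Hessenberg form: `A` is upper Hessenberg, `B 0 0 ≥ 0`, and the rest of the
first column of `B` vanishes. -/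
def IsHessenbergPair {n d : ℕ} [NeZero n] [NeZero d] (A : Matrix (Fin n) (Fin n) ℝ)
    (B : Matrix (Fin n) (Fin d) ℝ) : Prop :=
  (∀ i j : Fin n, (j : ℕ) + 1 < (i : ℕ) → A i j = 0) ∧
  0 ≤ B 0 0 ∧
  ∀ j : Fin n, j ≠ 0 → B j 0 = 0

/-- `(A,B)` is input normal: `A Aᵀ + B Bᵀ = I`. -/
def InputNormal {n d : ℕ} (A : Matrix (Fin n) (Fin n) ℝ)
    (B : Matrix (Fin n) (Fin d) ℝ) : Prop :=
  A * Aᵀ + B * Bᵀ = 1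

/-- A Hessenberg pair is standard if the subdiagonal of `A` is nonnegative and
`0 ≤ B 0 0 ≤ 1`. -/
def StandardPair {n d : ℕ} [NeZero n] [NeZero d] (A : Matrix (Fin n) (Fin n) ℝ)
    (B : Matrix (Fin n) (Fin d) ℝ) : Prop :=
  (∀ i j : Fin n, (i : ℕ) = (j : ℕ) + 1 → 0 ≤ A i j) ∧ 0 ≤ B 0 0 ∧ B 0 0 ≤ 1

/-- A Hessenberg pair is nondegenerate if `B 0 0 < 1`. -/
def NondegeneratePair {n d : ℕ} [NeZero n] [NeZero d] (A : Matrix (Fin n) (Fin n) ℝ)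
    (B : Matrix (Fin n) (Fin d) ℝ) : Prop :=
  B 0 0 < 1

/-- Implicit-Q lemma for HIN pairs: if `(A,B)` and `(A',B') = (Tᵀ A T, Tᵀ B)` are orthogonally
equivalent standard nondegenerate HIN pairs, `A_{k+1,k} = 0` (1-based), `B_{1,1} > 0`, and
`A_{j+1,j} > 0` for all `1 ≤ j < k`, then `T = I_k ⊕ U` for some orthogonal `U`, and moreover
`A'_{k+1,k} = 0`. -/
theorem implicitQ_HIN (n d : ℕ) [NeZero n] [NeZero d]
    (A A' : Matrix (Fin n) (Fin n) ℝ) (B B' : Matrix (Fin n) (Fin d) ℝ)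
    (hHess : IsHessenbergPair A B) (hIN : InputNormal A B)
    (hStd : StandardPair A B) (hNdg : NondegeneratePair A B)
    (hHess' : IsHessenbergPair A' B') (hIN' : InputNormal A' B')
    (hStd' : StandardPair A' B') (hNdg' : NondegeneratePair A' B')
    (T : Matrix (Fin n) (Fin n) ℝ) (hT : Tᵀ * T = 1)
    (hA' : A' = Tᵀ * A * T) (hB' : B' = Tᵀ * B)
    (k : ℕ) (hk1 : 1 ≤ k) (hk2 : k < n)
    (hzero : A ⟨k, hk2⟩ ⟨k - 1, by omega⟩ = 0)
    (hBpos : 0 < B 0 0)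
    (hsub : ∀ j : ℕ, 1 ≤ j → j < k → ∀ (hj : j < n) (hj' : j - 1 < n),
        0 < A ⟨j, hj⟩ ⟨j - 1, hj'⟩) :
    (∀ i j : Fin n, ((i : ℕ) < k ∨ (j : ℕ) < k) →
        T i j = if (i : ℕ) = (j : ℕ) then 1 else 0) ∧
    A' ⟨k, hk2⟩ ⟨k - 1, by omega⟩ = 0 := by
  classical
  have hTTt : T * Tᵀ = 1 := mul_eq_one_comm.mp hT
  have hTtT : ∀ i j : Fin n, (∑ x, T x i * T x j) = if i = j then 1 else 0 := by
    intro i j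
    have h := congrFun (congrFun hT i) j
    simpa [Matrix.mul_apply, Matrix.one_apply] using h
  have hTTt2 : ∀ i j : Fin n, (∑ x, T i x * T j x) = if i = j then 1 else 0 := by
    intro i j
    have h := congrFun (congrFun hTTt i) j
    simpa [Matrix.mul_apply, Matrix.one_apply] using h
  have hAT : A * T = T * A' := by
    rw [hA', ← Matrix.mul_assoc, ← Matrix.mul_assoc, hTTt, Matrix.one_mul]
  -- helper: if diagonal entry of a column is 1, rest of column is 0
  have sqcol : ∀ j : Fin n, T j j = 1 → ∀ r : Fin n, r ≠ j → T r j = 0 := by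
    intro j hjj r hrj
    have hsum := hTtT j j
    rw [if_pos rfl] at hsum
    have h := Finset.add_sum_erase Finset.univ (fun x => T x j * T x j) (Finset.mem_univ j)
    simp only [hjj, one_mul] at h
    rw [hsum] at h
    have h0 : ∑ x ∈ Finset.univ.erase j, T x j * T x j = 0 := by linarith
    have hall := (Finset.sum_eq_zero_iff_of_nonneg
      (fun x _ => mul_self_nonneg (T x j))).mp h0
    have := hall r (Finset.mem_erase.mpr ⟨hrj, Finset.mem_univ r⟩)
    exact mul_self_eq_zero.mp this
  -- main column lemma
  have hcol : ∀ m : ℕ, m < k → ∀ (hm : m < n) (r : Fin n),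
      T r ⟨m, hm⟩ = if (r : ℕ) = m then 1 else 0 := by
    intro m
    induction m using Nat.strong_induction_on with
    | _ m IH =>
      rcases m with _ | m
      · -- base case: column 0
        intro _ hm r
        have h0n : (⟨0, hm⟩ : Fin n) = 0 := by ext; simp
        rw [h0n]
        have hrow0 : ∀ j : Fin n, j ≠ 0 → T 0 j = 0 := by
          intro j hj
          have hb := congrFun (congrFun hB' j) 0
          rw [Matrix.mul_apply] at hb
          have hsum : (∑ x, Tᵀ j x * B x 0) = T 0 j * B 0 0 := by
            rw [Finset.sum_eq_single 0]
            · rfl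
            · intro b _ hb0
              rw [hHess.2.2 b hb0, mul_zero]
            · simp
          rw [hsum, hHess'.2.2 j hj] at hb
          rcases mul_eq_zero.mp hb.symm with h | h
          · exact h
          · exact absurd h hBpos.ne'
        have hb00 : B' 0 0 = T 0 0 * B 0 0 := by
          have hb := congrFun (congrFun hB' 0) 0
          rw [Matrix.mul_apply] at hb
          rw [hb, Finset.sum_eq_single 0]
          · rfl
          · intro b _ hb0
            rw [hHess.2.2 b hb0, mul_zero]
          · simp
        have hT00nn : 0 ≤ T 0 0 := by
          by_contra h
          push_neg at h
          nlinarith [hHess'.2.1]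
        have hT00sq : T 0 0 * T 0 0 = 1 := by
          have hsum := hTTt2 0 0
          rw [if_pos rfl, Finset.sum_eq_single 0] at hsum
          · exact hsum
          · intro b _ hb0
            rw [hrow0 b hb0, mul_zero]
          · simp
        have hT00 : T 0 0 = 1 := by nlinarith
        rcases eq_or_ne r 0 with rfl | hr
        · simpa using hT00
        · have : T r 0 = 0 := sqcol 0 hT00 r hr
          rw [this]
          have : (r : ℕ) ≠ 0 := fun h => hr (by ext; simpa using h)
          simp [this]
      · -- step case: column m+1
        intro hmk hm r
        have hmn : m < n := by omega
        have hmk' : m < k := by omega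
        set jm : Fin n := ⟨m, hmn⟩ with hjm
        set jc : Fin n := ⟨m + 1, hm⟩ with hjc
        have hcolm : ∀ s : Fin n, T s jm = if (s : ℕ) = m then 1 else 0 :=
          IH m (Nat.lt_succ_self m) hmk' hmn
        -- columns indexed < m+1 are std basis vectors
        have hIHfin : ∀ i : Fin n, (i : ℕ) < m + 1 → ∀ s : Fin n,
            T s i = if (s : ℕ) = (i : ℕ) then 1 else 0 := by
          intro i hi s
          have := IH (i : ℕ) hi (by omega) i.isLt s
          simpa [Fin.eta] using this
        -- entries of column jc above the diagonal vanish
        have hleft : ∀ r : Fin n, (r : ℕ) < m + 1 → T r jc = 0 := by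
          intro r hr
          have hne : r ≠ jc := by
            intro h
            rw [h] at hr
            simp [hjc] at hr
          have hsum := hTtT r jc
          rw [if_neg hne, Finset.sum_eq_single r] at hsum
          · have hTrr : T r r = 1 := by simp [hIHfin r hr r]
            rwa [hTrr, one_mul] at hsum
          · intro b _ hbr
            have : T b r = 0 := by
              have := hIHfin r hr b
              rw [this, if_neg (fun h => hbr (by ext; simpa using h))]
            rw [this, zero_mul]
          · simp
        -- key relation from A T = T A'
        have hkey : ∀ r : Fin n, m + 1 ≤ (r : ℕ) → A r jm = T r jc * A' jc jm := by
          intro r hr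
          have h := congrFun (congrFun hAT r) jm
          rw [Matrix.mul_apply, Matrix.mul_apply] at h
          have hlhs : (∑ s, A r s * T s jm) = A r jm := by
            rw [Finset.sum_eq_single jm]
            · rw [hcolm jm, if_pos rfl, mul_one]
            · intro b _ hb
              rw [hcolm b, if_neg (fun hh => hb (by ext; simpa using hh)), mul_zero]
            · simp
          have hrhs : (∑ i, T r i * A' i jm) = T r jc * A' jc jm := by
            rw [Finset.sum_eq_single jc]
            · intro b _ hb
              rcases lt_or_ge (b : ℕ) (m + 1) with hb1 | hb1
              · have : T r b = 0 := by
                  rw [hIHfin b hb1 r, if_neg (by omega)]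
                rw [this, zero_mul]
              · have hb2 : m + 1 < (b : ℕ) := by
                  rcases lt_or_eq_of_le hb1 with h' | h'
                  · exact h'
                  · exact absurd (by ext; simpa using h'.symm : b = jc) hb
                have : A' b jm = 0 := hHess'.1 b jm (by simpa [hjm] using hb2)
                rw [this, mul_zero]
            · simp
          rw [hlhs, hrhs] at h
          exact h
        -- positivity at the diagonal
        have hApos : 0 < A jc jm := by
          have := hsub (m + 1) (by omega) hmk hm (by omega)
          simpa [hjc, hjm] using this
        have hA'nn : 0 ≤ A' jc jm := hStd'.1 jc jm (by simp [hjc, hjm])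
        have hkc : A jc jm = T jc jc * A' jc jm := hkey jc (by simp [hjc])
        have hA'pos : 0 < A' jc jm := by
          rcases lt_or_eq_of_le hA'nn with h | h
          · exact h
          · rw [← h, mul_zero] at hkc
            exact absurd hkc hApos.ne'
        have hTccpos : 0 < T jc jc := by
          by_contra h
          push_neg at h
          nlinarith
        -- entries below the diagonal vanish
        have hbelow : ∀ r : Fin n, m + 1 < (r : ℕ) → T r jc = 0 := by
          intro r hr
          have hA0 : A r jm = 0 := hHess.1 r jm (by simpa [hjm] using hr)
          have := hkey r (le_of_lt hr)
          rw [hA0] at this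
          rcases mul_eq_zero.mp this.symm with h | h
          · exact h
          · exact absurd h hA'pos.ne'
        have hTcc : T jc jc = 1 := by
          have hsum := hTtT jc jc
          rw [if_pos rfl, Finset.sum_eq_single jc] at hsum
          · nlinarith
          · intro b _ hb
            rcases lt_or_ge (b : ℕ) (m + 1) with hb1 | hb1
            · rw [hleft b hb1, zero_mul]
            · have hb2 : m + 1 < (b : ℕ) := by
                rcases lt_or_eq_of_le hb1 with h' | h'
                · exact h'
                · exact absurd (by ext; simpa using h'.symm : b = jc) hb
              rw [hbelow b hb2, zero_mul]
          · simp
        rcases lt_trichotomy (r : ℕ) (m + 1) with h | h | h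
        · rw [hleft r h, if_neg (by omega)]
        · have : r = jc := by ext; simpa using h
          rw [this, hTcc, if_pos (by simp [hjc])]
        · rw [hbelow r h, if_neg (by omega)]
  -- Part 1 of the conclusion
  have part1 : ∀ i j : Fin n, ((i : ℕ) < k ∨ (j : ℕ) < k) →
      T i j = if (i : ℕ) = (j : ℕ) then 1 else 0 := by
    intro i j hij
    rcases hij with hi | hj
    · -- row case: use orthogonality with known column i
      have hcoli : ∀ s : Fin n, T s i = if (s : ℕ) = (i : ℕ) then 1 else 0 := by
        intro s
        have := hcol (i : ℕ) hi i.isLt s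
        simpa [Fin.eta] using this
      have hsum := hTtT i j
      rw [Finset.sum_eq_single i] at hsum
      · rw [hcoli i, if_pos rfl, one_mul] at hsum
        rw [hsum]
        by_cases h : i = j
        · rw [if_pos h, if_pos (by rw [h])]
        · rw [if_neg h, if_neg (fun hh => h (by ext; simpa using hh))]
      · intro b _ hb
        rw [hcoli b, if_neg (fun hh => hb (by ext; simpa using hh)), zero_mul]
      · simp
    · have := hcol (j : ℕ) hj j.isLt i
      simpa [Fin.eta] using this
  refine ⟨part1, ?_⟩
  -- Part 2: A' k (k-1) = 0
  have hk1n : k - 1 < n := by omega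
  set jm : Fin n := ⟨k - 1, hk1n⟩ with hjm
  set jc : Fin n := ⟨k, hk2⟩ with hjc
  have hcolm : ∀ s : Fin n, T s jm = if (s : ℕ) = k - 1 then 1 else 0 :=
    hcol (k - 1) (by omega) hk1n
  have h := congrFun (congrFun hA' jc) jm
  rw [Matrix.mul_assoc, Matrix.mul_apply] at h
  rw [h]
  apply Finset.sum_eq_zero
  intro r _
  have hAr : (A * T) r jm = A r jm := by
    rw [Matrix.mul_apply, Finset.sum_eq_single jm]
    · rw [hcolm jm, if_pos rfl, mul_one]
    · intro b _ hb
      rw [hcolm b, if_neg (fun hh => hb (by ext; simpa [hjm] using hh)), mul_zero]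
    · simp
  rw [Matrix.transpose_apply, hAr]
  rcases lt_trichotomy (r : ℕ) k with hr | hr | hr
  · have : T r jc = 0 := by
      rw [part1 r jc (Or.inl hr), if_neg (by simp [hjc]; omega)]
    rw [this, zero_mul]
  · have : r = jc := by ext; simpa [hjc] using hr
    rw [this]
    have : A jc jm = 0 := by simpa [hjc, hjm] using hzero
    rw [this, mul_zero]
  · have : A r jm = 0 := hHess.1 r jm (by simp [hjm]; omega)
    rw [this, mul_zero]
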